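/- Let n ≥ 1, d ≥ 1, c > 0, let x0 be a reference configuration, and let P_0 be the associated polytope. Then for every k ≥ 1, the k-th spectral moment x ↦ m_k(x) = (1/n)·tr(A(x)^k) is a convex function on P_0. -/

import Mathlib

open Matrix

/-- The weighted adjacency matrix of a configuration `x : Fin n → Fin d → ℝ` of `n` robots
in `ℝ^d`: `A(x)_{ij} = exp(−c Σ_r |x i r − x j r|)` for `i ≠ j` and `A(x)_{ii} = 0`. -/
noncomputable def adjMat {n d : ℕ} (c : ℝ) (x : Fin n → Fin d → ℝ) :
    Matrix (Fin n) (Fin n) ℝ :=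
  Matrix.of fun i j =>
    if i = j then 0 else Real.exp (-c * ∑ r, |x i r - x j r|)

/-- The polytope `P₀` associated to a reference configuration `x0`. -/
def polytopeP0 {n d : ℕ} (x0 : Fin n → Fin d → ℝ) : Set (Fin n → Fin d → ℝ) :=
  {x | ∀ i j : Fin n, ∀ r : Fin d, x0 i r ≤ x0 j r → x i r ≤ x j r}

section Aux

variable {n d : ℕ}

lemma convex_polytopeP0 (x0 : Fin n → Fin d → ℝ) : Convex ℝ (polytopeP0 x0) := by
  intro x hx y hy a b ha hb hab i j r hij
  have h1 := hx i j r hij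
  have h2 := hy i j r hij
  simp only [Pi.add_apply, Pi.smul_apply, smul_eq_mul]
  have := mul_le_mul_of_nonneg_left h1 ha
  have := mul_le_mul_of_nonneg_left h2 hb
  linarith

/-- A function that, on `P`, is either identically zero or the exponential of an affine
function. -/
def GoodFun (P : Set (Fin n → Fin d → ℝ)) (f : (Fin n → Fin d → ℝ) → ℝ) : Prop :=
  (∀ x ∈ P, f x = 0) ∨
    ∃ (L : (Fin n → Fin d → ℝ) →ₗ[ℝ] ℝ) (b : ℝ), ∀ x ∈ P, f x = Real.exp (L x + b)

lemma GoodFun.convexOn {P : Set (Fin n → Fin d → ℝ)} (hP : Convex ℝ P)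
    {f : (Fin n → Fin d → ℝ) → ℝ} (hf : GoodFun P f) : ConvexOn ℝ P f := by
  rcases hf with hf | ⟨L, b, hf⟩
  · refine ⟨hP, fun x hx y hy a b' ha hb hab => ?_⟩
    rw [hf _ (hP hx hy ha hb hab), hf _ hx, hf _ hy]
    simp
  · refine ⟨hP, fun x hx y hy a b' ha hb hab => ?_⟩
    rw [hf _ (hP hx hy ha hb hab), hf _ hx, hf _ hy]
    have hrw : L (a • x + b' • y) + b = a * (L x + b) + b' * (L y + b) := by
      simp only [map_add, LinearMap.map_smul, smul_eq_mul]
      linear_combination (-b) * hab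
    rw [hrw]
    have := convexOn_exp.2 (Set.mem_univ (L x + b)) (Set.mem_univ (L y + b)) ha hb hab
    simpa [smul_eq_mul] using this

lemma GoodFun.mul {P : Set (Fin n → Fin d → ℝ)} {f g : (Fin n → Fin d → ℝ) → ℝ}
    (hf : GoodFun P f) (hg : GoodFun P g) : GoodFun P (f * g) := by
  rcases hf with hf | ⟨L1, b1, hf⟩
  · exact Or.inl fun x hx => by simp [Pi.mul_apply, hf x hx]
  rcases hg with hg | ⟨L2, b2, hg⟩
  · exact Or.inl fun x hx => by simp [Pi.mul_apply, hg x hx]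
  · refine Or.inr ⟨L1 + L2, b1 + b2, fun x hx => ?_⟩
    simp only [Pi.mul_apply, hf x hx, hg x hx, LinearMap.add_apply]
    rw [← Real.exp_add]
    ring_nf

/-- The coordinate projection as a linear map. -/
noncomputable def coordProj (i : Fin n) (r : Fin d) : (Fin n → Fin d → ℝ) →ₗ[ℝ] ℝ :=
  (LinearMap.proj (R := ℝ) (φ := fun _ : Fin d => ℝ) r).comp
    (LinearMap.proj (R := ℝ) (φ := fun _ : Fin n => Fin d → ℝ) i)

lemma good_entry (c : ℝ) (x0 : Fin n → Fin d → ℝ) (i j : Fin n) :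
    GoodFun (polytopeP0 x0) (fun x => adjMat c x i j) := by
  by_cases hij : i = j
  · exact Or.inl fun x hx => by simp [adjMat, hij]
  · refine Or.inr ⟨∑ r : Fin d, (-c * (if x0 i r ≤ x0 j r then (1:ℝ) else -1)) •
      (coordProj j r - coordProj i r), 0, fun x hx => ?_⟩
    simp only [adjMat, Matrix.of_apply, if_neg hij]
    congr 1
    have hL : ∀ r : Fin d,
        |x i r - x j r| = (if x0 i r ≤ x0 j r then (1:ℝ) else -1) * (x j r - x i r) := by
      intro r
      by_cases h : x0 i r ≤ x0 j r
      · have := hx i j r h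
        rw [if_pos h, one_mul, abs_sub_comm, abs_of_nonneg (by linarith)]
      · have := hx j i r (le_of_lt (lt_of_not_ge h))
        rw [if_neg h, abs_of_nonneg (by linarith)]
        ring
    rw [LinearMap.sum_apply, add_zero, Finset.mul_sum]
    refine Finset.sum_congr rfl fun r _ => ?_
    rw [hL r]
    simp only [LinearMap.smul_apply, LinearMap.sub_apply, coordProj, LinearMap.comp_apply,
      LinearMap.proj_apply, smul_eq_mul]
    ring

/-- The additive submonoid of functions generated by good functions. -/
noncomputable def goodMonoid (P : Set (Fin n → Fin d → ℝ)) :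
    AddSubmonoid ((Fin n → Fin d → ℝ) → ℝ) :=
  AddSubmonoid.closure {f | GoodFun P f}

lemma goodMonoid_convexOn {P : Set (Fin n → Fin d → ℝ)} (hP : Convex ℝ P)
    {f : (Fin n → Fin d → ℝ) → ℝ} (hf : f ∈ goodMonoid P) : ConvexOn ℝ P f := by
  induction hf using AddSubmonoid.closure_induction with
  | mem g hg => exact GoodFun.convexOn hP hg
  | zero =>
    refine ⟨hP, fun x hx y hy a b ha hb hab => ?_⟩
    simp
  | add g h hg hh ihg ihh => exact ihg.add ihh

lemma goodMonoid_mul {P : Set (Fin n → Fin d → ℝ)} {f g : (Fin n → Fin d → ℝ) → ℝ}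
    (hf : f ∈ goodMonoid P) (hg : GoodFun P g) : f * g ∈ goodMonoid P := by
  induction hf using AddSubmonoid.closure_induction with
  | mem h hh => exact AddSubmonoid.subset_closure (hh.mul hg)
  | zero => simpa [zero_mul] using (goodMonoid P).zero_mem
  | add h₁ h₂ hh₁ hh₂ ih₁ ih₂ =>
    have : (h₁ + h₂) * g = h₁ * g + h₂ * g := add_mul _ _ _
    rw [this]
    exact (goodMonoid P).add_mem ih₁ ih₂

lemma entry_pow_mem (c : ℝ) (x0 : Fin n → Fin d → ℝ) (k : ℕ) (hk : 1 ≤ k) :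
    ∀ i j : Fin n, (fun x => ((adjMat c x) ^ k) i j) ∈ goodMonoid (polytopeP0 x0) := by
  induction k, hk using Nat.le_induction with
  | base =>
    intro i j
    simp only [pow_one]
    exact AddSubmonoid.subset_closure (good_entry c x0 i j)
  | succ k hk ih =>
    intro i j
    have hfun : (fun x : Fin n → Fin d → ℝ => ((adjMat c x) ^ (k + 1)) i j) =
        ∑ l : Fin n, (fun x : Fin n → Fin d → ℝ => ((adjMat c x) ^ k) i l) * (fun x : Fin n → Fin d → ℝ => adjMat c x l j) := by
      funext x
      simp only [pow_succ, Matrix.mul_apply, Finset.sum_apply, Pi.mul_apply]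
    rw [hfun]
    exact AddSubmonoid.sum_mem _ fun l _ => goodMonoid_mul (ih i l) (good_entry c x0 l j)

end Aux

/-- For every `k ≥ 1`, the `k`-th spectral moment
`x ↦ m_k(x) = (1/n) tr(A(x)^k)` is convex on `P₀`. -/
theorem spectral_moment_convexOn_polytope (n d : ℕ) (hn : 1 ≤ n) (hd : 1 ≤ d)
    (c : ℝ) (hc : 0 < c) (x0 : Fin n → Fin d → ℝ) (k : ℕ) (hk : 1 ≤ k) :
    ConvexOn ℝ (polytopeP0 x0)
      (fun x => (1 / (n : ℝ)) * ((adjMat c x) ^ k).trace) := by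
  have hmem : (fun x => ((adjMat c x) ^ k).trace) ∈ goodMonoid (polytopeP0 x0) := by
    have : (fun x => ((adjMat c x) ^ k).trace) =
        ∑ i : Fin n, (fun x : Fin n → Fin d → ℝ => ((adjMat c x) ^ k) i i) := by
      funext x
      simp [Matrix.trace, Matrix.diag]
    rw [this]
    exact AddSubmonoid.sum_mem _ fun i _ => entry_pow_mem c x0 k hk i i
  have hconv := goodMonoid_convexOn (convex_polytopeP0 x0) hmem
  have := hconv.smul (c := 1 / (n : ℝ)) (by positivity)
  simpa [smul_eq_mul] using this
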